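/- Let M ≥ 2 be a squarefree integer, K = ℚ(√M), and let ε be any unit of 𝒪_K. If m is a divisor of M with m > 2 such that the ideal 𝔪_m = ∏_{q prime, q ∣ m} 𝔮_q divides the principal ideal (ε + 1) of 𝒪_K, then N(ε) = 1. -/

import Mathlib

open NumberField

/-- The real quadratic field `K = ℚ(√M)`, realized inside `ℝ`. -/
noncomputable def Ksqrt (M : ℕ) : IntermediateField ℚ ℝ :=
  IntermediateField.adjoin ℚ {Real.sqrt M}

/-- `ε` is the fundamental unit of `ℚ(√M)`: `ε > 1` and `ε` is minimal among units `> 1`. -/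
def IsFundamentalUnit (M : ℕ) (ε : (𝓞 (Ksqrt M))ˣ) : Prop :=
  1 < (((ε : 𝓞 (Ksqrt M)) : Ksqrt M) : ℝ) ∧
    ∀ u : (𝓞 (Ksqrt M))ˣ, 1 < (((u : 𝓞 (Ksqrt M)) : Ksqrt M) : ℝ) →
      (((ε : 𝓞 (Ksqrt M)) : Ksqrt M) : ℝ) ≤ (((u : 𝓞 (Ksqrt M)) : Ksqrt M) : ℝ)

/-- Given the family `Q` of ramified primes (`Q q` is the prime ideal above `q`),
this is the squarefree product ideal `𝔪_d = ∏_{q prime, q ∣ d} 𝔮_q`. -/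
noncomputable def mIdeal (M : ℕ) (Q : ℕ → Ideal (𝓞 (Ksqrt M))) (d : ℕ) :
    Ideal (𝓞 (Ksqrt M)) :=
  ∏ q ∈ d.primeFactors, Q q

open Polynomial
section Aux

variable (M : ℕ)

lemma sqrtM_irr (hM : 2 ≤ M) (hsf : Squarefree M) : Irrational (Real.sqrt M) := by
  rw [irrational_sqrt_natCast_iff]
  rintro ⟨k, rfl⟩
  have hk : IsUnit k := hsf k ⟨1, by ring⟩
  rw [Nat.isUnit_iff] at hk
  rw [hk] at hM
  norm_num at hM

lemma sqrtM_int : IsIntegral ℚ (Real.sqrt M) := by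
  refine ⟨X ^ 2 - C (M : ℚ), monic_X_pow_sub_C _ (by norm_num), ?_⟩
  simp [Real.sq_sqrt (by positivity : (0:ℝ) ≤ (M:ℝ))]

lemma minpoly_deg (hM : 2 ≤ M) (hsf : Squarefree M) :
    (minpoly ℚ (Real.sqrt M)).natDegree = 2 := by
  have hd2 : (X ^ 2 - C (M : ℚ)).natDegree = 2 := by
    rw [Polynomial.natDegree_X_pow_sub_C]
  have h1 : (minpoly ℚ (Real.sqrt M)) ∣ X ^ 2 - C (M : ℚ) := by
    apply minpoly.dvd
    simp [Real.sq_sqrt (by positivity : (0:ℝ) ≤ (M:ℝ))]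
  have h2 := Polynomial.natDegree_le_of_dvd h1 (by
      intro h; rw [h] at hd2; simp at hd2)
  rw [hd2] at h2
  have h3 : 2 ≤ (minpoly ℚ (Real.sqrt M)).natDegree := by
    rw [minpoly.two_le_natDegree_iff (sqrtM_int M)]
    rintro ⟨r, hr⟩
    exact (sqrtM_irr M hM hsf) ⟨r, hr⟩
  omega

/-- the generator `√M` as an element of `Ksqrt M`. -/
noncomputable def θM : Ksqrt M := IntermediateField.AdjoinSimple.gen ℚ (Real.sqrt M)

lemma θM_sq : (θM M) ^ 2 = algebraMap ℚ (Ksqrt M) (M : ℚ) := by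
  apply Subtype.ext
  have h1 : ((θM M : ℝ)) = Real.sqrt M := rfl
  have h2 : (((θM M) ^ 2 : Ksqrt M) : ℝ) = (θM M : ℝ) ^ 2 := by push_cast; ring
  rw [h2, h1, Real.sq_sqrt (by positivity : (0:ℝ) ≤ (M:ℝ))]
  norm_num

/-- the basis `{1, √M}` of `Ksqrt M` over `ℚ`. -/
noncomputable def bKM (hM : 2 ≤ M) (hsf : Squarefree M) : Module.Basis (Fin 2) ℚ (Ksqrt M) :=
  (IntermediateField.adjoin.powerBasis (sqrtM_int M)).basis.reindex
    (finCongr (minpoly_deg M hM hsf))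

lemma bKM_zero (hM : 2 ≤ M) (hsf : Squarefree M) : bKM M hM hsf 0 = 1 := by
  rw [bKM]
  erw [Module.Basis.reindex_apply, PowerBasis.basis_eq_pow, finCongr_symm_apply_coe]
  simp
  rfl

lemma bKM_one (hM : 2 ≤ M) (hsf : Squarefree M) : bKM M hM hsf 1 = θM M := by
  rw [bKM]
  erw [Module.Basis.reindex_apply, PowerBasis.basis_eq_pow, finCongr_symm_apply_coe]
  simp
  rfl

end Aux

section NormTrace

variable (M : ℕ) (hM : 2 ≤ M) (hsf : Squarefree M) [NumberField (Ksqrt M)]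

lemma leftMul_matrix_eq (r s : ℚ) :
    Algebra.leftMulMatrix (bKM M hM hsf)
      (algebraMap ℚ (Ksqrt M) r + algebraMap ℚ (Ksqrt M) s * θM M) = !![r, M * s; s, r] := by
  set b := bKM M hM hsf with hb
  set x := algebraMap ℚ (Ksqrt M) r + algebraMap ℚ (Ksqrt M) s * θM M with hx
  have hb0 : b 0 = 1 := bKM_zero M hM hsf
  have hb1 : b 1 = θM M := bKM_one M hM hsf
  have hx0 : x * b 0 = r • b 0 + s • b 1 := by
    rw [hb0, hb1, Algebra.smul_def, Algebra.smul_def, mul_one, mul_one]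
  have hx1 : x * b 1 = (M * s) • b 0 + r • b 1 := by
    rw [hb0, hb1, Algebra.smul_def, Algebra.smul_def, mul_one]
    have hθ : θM M ^ 2 = ((M : ℕ) : Ksqrt M) := by rw [θM_sq]; simp
    push_cast
    linear_combination (algebraMap ℚ (Ksqrt M) s) * hθ
  ext i j
  rw [Algebra.leftMulMatrix_eq_repr_mul]
  fin_cases j <;> fin_cases i <;>
    simp [hx0, hx1, Finsupp.single_apply]

lemma trace_eq (hM : 2 ≤ M) (hsf : Squarefree M) (r s : ℚ) :
    Algebra.trace ℚ (Ksqrt M) (algebraMap ℚ (Ksqrt M) r + algebraMap ℚ (Ksqrt M) s * θM M)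
      = 2 * r := by
  rw [Algebra.trace_eq_matrix_trace (bKM M hM hsf), leftMul_matrix_eq M hM hsf,
    Matrix.trace_fin_two_of]
  ring

lemma norm_eq (hM : 2 ≤ M) (hsf : Squarefree M) (r s : ℚ) :
    Algebra.norm ℚ (algebraMap ℚ (Ksqrt M) r + algebraMap ℚ (Ksqrt M) s * θM M)
      = r ^ 2 - M * s ^ 2 := by
  rw [Algebra.norm_eq_matrix_det (bKM M hM hsf), leftMul_matrix_eq M hM hsf,
    Matrix.det_fin_two_of]
  ring

end NormTrace

lemma den_one (M : ℕ) (hsf : Squarefree M) (s : ℚ) (D : ℤ) (h : s ^ 2 * M = (D : ℚ)) :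
    ∃ s' : ℤ, (s' : ℚ) = s := by
  have h2 : ((s.num : ℚ)) ^ 2 * M = (D : ℚ) * ((s.den : ℚ)) ^ 2 := by
    rw [← Rat.num_div_den s] at h
    have hd : ((s.den : ℚ)) ≠ 0 := by exact_mod_cast s.den_ne_zero
    field_simp at h
    linarith
  have h3 : (s.num) ^ 2 * (M : ℤ) = D * (s.den : ℤ) ^ 2 := by exact_mod_cast h2
  have h4 : ((s.den : ℤ)) ^ 2 ∣ (s.num) ^ 2 * (M : ℤ) := ⟨D, by linarith⟩
  have h5 : (s.den) ^ 2 ∣ (s.num.natAbs) ^ 2 * M := by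
    have := Int.natAbs_dvd_natAbs.mpr h4
    simpa [Int.natAbs_mul, Int.natAbs_pow] using this
  have hcop : (s.den ^ 2).Coprime (s.num.natAbs ^ 2) :=
    Nat.Coprime.pow _ _ (Nat.Coprime.symm s.reduced)
  have h6 : (s.den) ^ 2 ∣ M := by
    refine hcop.dvd_of_dvd_mul_right ?_
    rwa [mul_comm] at h5
  have h7 : IsUnit s.den := hsf s.den (by rwa [← sq])
  have h8 : s.den = 1 := Nat.isUnit_iff.mp h7
  exact ⟨s.num, by rw [← Rat.num_div_den s, h8]; simp⟩

lemma exists_odd_prime (m : ℕ) (hsfm : Squarefree m) (hm : 2 < m) :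
    ∃ q, q.Prime ∧ q ∣ m ∧ q ≠ 2 := by
  by_contra h
  push_neg at h
  have hsub : m.primeFactors ⊆ {2} := by
    intro p hp
    rw [Nat.mem_primeFactors] at hp
    exact Finset.mem_singleton.mpr (h p hp.1 hp.2.1)
  have hprod := Nat.prod_primeFactors_of_squarefree hsfm
  rcases Finset.subset_singleton_iff.mp hsub with h0 | h1
  · rw [h0, Finset.prod_empty] at hprod; omega
  · rw [h1, Finset.prod_singleton] at hprod; omega

set_option maxHeartbeats 1000000 in
/-- For `M ≥ 2` squarefree, `K = ℚ(√M)`, and any unit `ε` of `𝒪_K`: if a divisor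
`m > 2` of `M` is such that `𝔪_m = ∏_(q ∣ m) 𝔮_q` divides the ideal `(ε + 1)`,
then `N(ε) = 1`. -/
theorem stmt_13 (M : ℕ) (hM : 2 ≤ M) (hsf : Squarefree M)
    [NumberField (Ksqrt M)]
    (ε : (𝓞 (Ksqrt M))ˣ)
    (Q : ℕ → Ideal (𝓞 (Ksqrt M)))
    (hQ : ∀ q : ℕ, q.Prime → q ∣ M → (Q q).IsPrime ∧ (q : 𝓞 (Ksqrt M)) ∈ Q q)
    (m : ℕ) (hmdvd : m ∣ M) (hm2 : 2 < m)
    (hdvd : mIdeal M Q m ∣ Ideal.span {(ε : 𝓞 (Ksqrt M)) + 1}) :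
    Algebra.norm ℚ ((ε : 𝓞 (Ksqrt M)) : Ksqrt M) = 1 := by
  classical
  set e : Ksqrt M := ((ε : 𝓞 (Ksqrt M)) : Ksqrt M) with he_def
  set r : ℚ := (bKM M hM hsf).repr e 0 with hr_def
  set s : ℚ := (bKM M hM hsf).repr e 1 with hs_def
  have he : e = algebraMap ℚ (Ksqrt M) r + algebraMap ℚ (Ksqrt M) s * θM M := by
    have h := Module.Basis.sum_repr (bKM M hM hsf) e
    rw [Fin.sum_univ_two] at h
    rw [← h, bKM_zero M hM hsf, bKM_one M hM hsf, Algebra.smul_def, Algebra.smul_def, mul_one]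
  have htr : Algebra.trace ℚ (Ksqrt M) e = 2 * r := by
    rw [he]; exact trace_eq M hM hsf r s
  have hnm : Algebra.norm ℚ e = r ^ 2 - M * s ^ 2 := by
    rw [he]; exact norm_eq M hM hsf r s
  have hint : IsIntegral ℤ e := RingOfIntegers.isIntegral_coe _
  obtain ⟨tz, htz⟩ : ∃ tz : ℤ, (tz : ℚ) = 2 * r := by
    rw [← htr]
    exact IsIntegrallyClosed.isIntegral_iff.mp (Algebra.isIntegral_trace hint)
  obtain ⟨Nz, hNz⟩ : ∃ Nz : ℤ, (Nz : ℚ) = r ^ 2 - M * s ^ 2 := by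
    rw [← hnm]
    exact IsIntegrallyClosed.isIntegral_iff.mp (Algebra.isIntegral_norm ℚ hint)
  obtain ⟨Nz', hNz'⟩ : ∃ Nz' : ℤ,
      (Nz' : ℚ) = Algebra.norm ℚ (((ε⁻¹ : (𝓞 (Ksqrt M))ˣ) : 𝓞 (Ksqrt M)) : Ksqrt M) :=
    IsIntegrallyClosed.isIntegral_iff.mp
      (Algebra.isIntegral_norm ℚ (RingOfIntegers.isIntegral_coe _))
  have hprod : Nz * Nz' = 1 := by
    have hmul : e * (((ε⁻¹ : (𝓞 (Ksqrt M))ˣ) : 𝓞 (Ksqrt M)) : Ksqrt M) = 1 := by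
      rw [he_def]
      rw [← map_mul (algebraMap (𝓞 (Ksqrt M)) (Ksqrt M))]
      rw [← map_one (algebraMap (𝓞 (Ksqrt M)) (Ksqrt M))]
      congr 1
      exact_mod_cast ε.mul_inv
    have h1 : Algebra.norm ℚ e *
        Algebra.norm ℚ (((ε⁻¹ : (𝓞 (Ksqrt M))ˣ) : 𝓞 (Ksqrt M)) : Ksqrt M) = 1 := by
      rw [← map_mul, hmul, map_one]
    rw [hnm, ← hNz', ← hNz] at h1
    exact_mod_cast h1
  have hNcases : Nz = 1 ∨ Nz = -1 := Int.isUnit_iff.mp (IsUnit.of_mul_eq_one _ hprod)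
  rcases hNcases with hN1 | hN1
  · rw [hnm, ← hNz, hN1]; norm_num
  -- Now the contradiction case : Nz = -1
  exfalso
  obtain ⟨q, hqp, hqm, hq2⟩ := exists_odd_prime m (hsf.squarefree_of_dvd hmdvd) hm2
  obtain ⟨hPprime, hqP⟩ := hQ q hqp (hqm.trans hmdvd)
  have hQdvd : Q q ∣ mIdeal M Q m :=
    Finset.dvd_prod_of_mem Q (Nat.mem_primeFactors.mpr ⟨hqp, hqm, by omega⟩)
  have h1 : (ε : 𝓞 (Ksqrt M)) + 1 ∈ Q q :=
    Ideal.le_of_dvd (hQdvd.trans hdvd) (Ideal.mem_span_singleton_self _)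
  have hDQ : ((2 * s) ^ 2 : ℚ) * M = ((tz ^ 2 - 4 * Nz : ℤ) : ℚ) := by
    push_cast
    linear_combination (-(tz : ℚ) - 2 * r) * htz + 4 * hNz
  obtain ⟨s', hs'⟩ := den_one M hsf (2 * s) (tz ^ 2 - 4 * Nz) hDQ
  have hqD : (q : ℤ) ∣ tz ^ 2 - 4 * Nz := by
    have hDint : tz ^ 2 - 4 * Nz = s' ^ 2 * M := by
      have h' := hDQ
      have : ((tz ^ 2 - 4 * Nz : ℤ) : ℚ) = ((s' ^ 2 * M : ℤ) : ℚ) := by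
        push_cast at h' ⊢
        rw [hs']
        linear_combination -h'
      exact_mod_cast this
    rw [hDint]
    exact Dvd.dvd.mul_left (Int.natCast_dvd_natCast.mpr (hqm.trans hmdvd)) _
  -- pass to the ring of integers
  have hθK : θM M ^ 2 = ((M : ℕ) : Ksqrt M) := by rw [θM_sq]; simp
  have hEnorm : (ε : 𝓞 (Ksqrt M)) * ((tz : 𝓞 (Ksqrt M)) - (ε : 𝓞 (Ksqrt M)))
      = (Nz : 𝓞 (Ksqrt M)) := by
    have ht : ((tz : ℤ) : Ksqrt M) = algebraMap ℚ (Ksqrt M) (2 * r) := by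
      rw [← htz, map_intCast]
    have hN : ((Nz : ℤ) : Ksqrt M) = algebraMap ℚ (Ksqrt M) (r ^ 2 - M * s ^ 2) := by
      rw [← hNz, map_intCast]
    apply RingOfIntegers.ext
    show e * (((tz : ℤ) : Ksqrt M) - e) = ((Nz : ℤ) : Ksqrt M)
    rw [ht, hN, he]
    simp only [map_sub, map_add, map_mul, map_pow, map_natCast, map_ofNat, map_one]
    linear_combination (-(algebraMap ℚ (Ksqrt M) s) ^ 2) * hθK
  have hδsq : (2 * (ε : 𝓞 (Ksqrt M)) - tz) ^ 2
      = ((tz ^ 2 - 4 * Nz : ℤ) : 𝓞 (Ksqrt M)) := by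
    have ht : ((tz : ℤ) : Ksqrt M) = algebraMap ℚ (Ksqrt M) (2 * r) := by
      rw [← htz, map_intCast]
    have hD : ((tz ^ 2 - 4 * Nz : ℤ) : Ksqrt M)
        = algebraMap ℚ (Ksqrt M) ((2 * s) ^ 2 * M) := by
      rw [← map_intCast (algebraMap ℚ (Ksqrt M)), ← hDQ]
    apply RingOfIntegers.ext
    show (2 * e - ((tz : ℤ) : Ksqrt M)) ^ 2 = ((tz ^ 2 - 4 * Nz : ℤ) : Ksqrt M)
    rw [ht, hD, he]
    simp only [map_sub, map_add, map_mul, map_pow, map_natCast, map_ofNat, map_one]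
    linear_combination (4 * (algebraMap ℚ (Ksqrt M) s) ^ 2) * hθK
  have hDP : ((tz ^ 2 - 4 * Nz : ℤ) : 𝓞 (Ksqrt M)) ∈ Q q := by
    obtain ⟨c, hc⟩ := hqD
    rw [hc]
    push_cast
    exact Ideal.mul_mem_right _ _ hqP
  have hδP : 2 * (ε : 𝓞 (Ksqrt M)) - tz ∈ Q q :=
    hPprime.mem_of_pow_mem 2 (by rw [hδsq]; exact hDP)
  have h2P : (tz : 𝓞 (Ksqrt M)) + 2 ∈ Q q := by
    have hrw : (tz : 𝓞 (Ksqrt M)) + 2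
        = 2 * ((ε : 𝓞 (Ksqrt M)) + 1) - (2 * (ε : 𝓞 (Ksqrt M)) - tz) := by ring
    rw [hrw]
    exact Ideal.sub_mem _ (Ideal.mul_mem_left _ _ h1) hδP
  have h2mem : (2 : 𝓞 (Ksqrt M)) ∈ Q q := by
    have hE : (ε : 𝓞 (Ksqrt M)) * ((tz : 𝓞 (Ksqrt M)) - (ε : 𝓞 (Ksqrt M))) = -1 := by
      rw [hEnorm, hN1]; push_cast; ring
    have key : (2 : 𝓞 (Ksqrt M))
        = ((ε : 𝓞 (Ksqrt M)) + 1) * ((ε : 𝓞 (Ksqrt M)) + 1) + ((tz : 𝓞 (Ksqrt M)) + 2)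
          - ((ε : 𝓞 (Ksqrt M)) + 1) * ((tz : 𝓞 (Ksqrt M)) + 2) := by
      linear_combination hE
    rw [key]
    exact Ideal.sub_mem _
      (Ideal.add_mem _ (Ideal.mul_mem_left _ _ h1) h2P)
      (Ideal.mul_mem_left _ _ h2P)
  have hcop : IsCoprime (2 : ℤ) (q : ℤ) := by
    have hc : Nat.Coprime 2 q :=
      (Nat.coprime_primes Nat.prime_two hqp).mpr (fun hh => hq2 hh.symm)
    exact Int.isCoprime_iff_gcd_eq_one.mpr (by simpa [Int.gcd] using hc)
  obtain ⟨u, v, huv⟩ := hcop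
  have hone : (1 : 𝓞 (Ksqrt M)) ∈ Q q := by
    have hcast : ((u * 2 + v * q : ℤ) : 𝓞 (Ksqrt M)) = 1 := by rw [huv]; norm_num
    rw [← hcast]
    push_cast
    exact Ideal.add_mem _ (Ideal.mul_mem_left _ _ h2mem) (Ideal.mul_mem_left _ _ hqP)
  exact hPprime.ne_top ((Ideal.eq_top_iff_one _).mpr hone)
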